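/- Let u : ℝ^m → [0,1] be a fuzzy set, t ∈ ℝ^m, and r > 0 a real number. Then the set D_{u,t,r} = ⋃_{e ∈ S^{m−1}} D_{u,t,r,e} is at most countable, where S^{m−1} is the unit sphere in ℝ^m and D_{u,t,r,e} is the set of discontinuous points of S_{u,t,r}(e, ·). -/

import Mathlib

open Set Metric

noncomputable def Sfun {m : ℕ} (u : EuclideanSpace ℝ (Fin m) → ℝ)
    (t : EuclideanSpace ℝ (Fin m)) (r : ℝ)
    (e : EuclideanSpace ℝ (Fin m)) (α : ℝ) : EReal :=
  sSup ((fun x => ((inner ℝ e (x - t) : ℝ) : EReal)) ''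
    ({x | α ≤ u x} ∩ closedBall t r))

noncomputable def Sr {m : ℕ} (u : EuclideanSpace ℝ (Fin m) → ℝ)
    (t : EuclideanSpace ℝ (Fin m)) (r : ℝ)
    (e : EuclideanSpace ℝ (Fin m)) (α : ℝ) : ℝ :=
  sSup (insert (-(2*r)) ((fun x => (inner ℝ e (x - t) : ℝ)) ''
    ({x | α ≤ u x} ∩ closedBall t r)))

variable {m : ℕ} {u : EuclideanSpace ℝ (Fin m) → ℝ} {t : EuclideanSpace ℝ (Fin m)} {r : ℝ}
  {e : EuclideanSpace ℝ (Fin m)}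

lemma Sr_bddAbove (hr : 0 < r) (he : ‖e‖ = 1) (α : ℝ) :
    BddAbove (insert (-(2*r)) ((fun x => (inner ℝ e (x - t) : ℝ)) ''
      ({x | α ≤ u x} ∩ closedBall t r))) := by
  refine ⟨2*r, ?_⟩
  rintro y (rfl | ⟨x, ⟨-, hx⟩, rfl⟩)
  · linarith
  · have h1 : (inner ℝ e (x - t) : ℝ) ≤ ‖e‖ * ‖x - t‖ := real_inner_le_norm _ _
    have h2 : ‖x - t‖ ≤ r := by rwa [← dist_eq_norm, ← mem_closedBall]
    simp only [he, one_mul] at h1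
    linarith

lemma Sr_antitone (hr : 0 < r) (he : ‖e‖ = 1) : Antitone (Sr u t r e) := by
  intro α β hab
  apply csSup_le_csSup (Sr_bddAbove hr he α) ⟨_, mem_insert _ _⟩
  apply insert_subset_insert
  apply image_mono
  exact inter_subset_inter_left _ (fun x hx => le_trans hab hx)

lemma Sfun_le_r (hr : 0 < r) (he : ‖e‖ = 1) (α : ℝ) : Sfun u t r e α ≤ (r : EReal) := by
  apply sSup_le
  rintro _ ⟨x, ⟨-, hx⟩, rfl⟩
  rw [EReal.coe_le_coe_iff]
  have h1 : (inner ℝ e (x - t) : ℝ) ≤ ‖e‖ * ‖x - t‖ := real_inner_le_norm _ _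
  have h2 : ‖x - t‖ ≤ r := by rwa [← dist_eq_norm, ← mem_closedBall]
  simp only [he, one_mul] at h1; linarith

lemma Sfun_antitone : Antitone (Sfun u t r e) := by
  intro α β hab
  apply sSup_le_sSup
  apply image_mono
  exact inter_subset_inter_left _ (fun x hx => le_trans hab hx)

lemma Sfun_ne_bot_iff {α : ℝ} :
    Sfun u t r e α ≠ ⊥ ↔ ({x | α ≤ u x} ∩ closedBall t r).Nonempty := by
  constructor
  · intro h
    by_contra hne
    rw [not_nonempty_iff_eq_empty] at hne
    apply h
    rw [Sfun, hne, image_empty, sSup_empty]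
  · rintro ⟨x, hx⟩ h
    have : ((inner ℝ e (x - t) : ℝ) : EReal) ≤ Sfun u t r e α := le_sSup ⟨x, hx, rfl⟩
    rw [h, le_bot_iff] at this
    exact (EReal.coe_ne_bot _) this

lemma key (hr : 0 < r) (he : ‖e‖ = 1) {α : ℝ} (hα : α ∈ Ioo (0:ℝ) 1)
    (hbot : Sfun u t r e α ≠ ⊥)
    (h1 : ⊥ < ⨆ β ∈ Ioc α 1, Sfun u t r e β)
    (h2 : (⨆ β ∈ Ioc α 1, Sfun u t r e β) < ⨅ β ∈ Ico (0:ℝ) α, Sfun u t r e β)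
    (E : ℕ → EuclideanSpace ℝ (Fin m)) (hE : ∀ k, ‖E k‖ = 1)
    (hdense : ∀ ε > 0, ∃ k, dist (E k) e < ε) :
    ∃ k, ¬ ContinuousAt (Sr u t r (E k)) α := by
  set Sp := ⨆ β ∈ Ioc α 1, Sfun u t r e β with hSp
  set Sm := ⨅ β ∈ Ico (0:ℝ) α, Sfun u t r e β with hSm
  -- Sp ≤ r
  have hSp_le : Sp ≤ (r : EReal) := by
    apply iSup₂_le; intro β _; exact Sfun_le_r hr he β
  have hSp_ne_top : Sp ≠ ⊤ := fun h => by
    rw [h] at hSp_le; exact (EReal.coe_lt_top r).not_ge hSp_le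
  have hSp_ne_bot : Sp ≠ ⊥ := h1.ne'
  -- Sm bounds
  have hSm_ge : Sfun u t r e α ≤ Sm := by
    apply le_iInf₂; intro β hβ; exact Sfun_antitone hβ.2.le
  have hSm_ne_bot : Sm ≠ ⊥ := fun h => hbot (le_bot_iff.1 (h ▸ hSm_ge))
  have hSm_le : Sm ≤ (r : EReal) :=
    le_trans (iInf₂_le (0:ℝ) ⟨le_refl _, hα.1⟩) (Sfun_le_r hr he 0)
  have hSm_ne_top : Sm ≠ ⊤ := fun h => by
    rw [h] at hSm_le; exact (EReal.coe_lt_top r).not_ge hSm_le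
  set sp := Sp.toReal with hsp
  set sm := Sm.toReal with hsm
  have hSpc : Sp = (sp : EReal) := (EReal.coe_toReal hSp_ne_top hSp_ne_bot).symm
  have hSmc : Sm = (sm : EReal) := (EReal.coe_toReal hSm_ne_top hSm_ne_bot).symm
  have hδ : 0 < sm - sp := by
    have := h2; rw [hSpc, hSmc, EReal.coe_lt_coe_iff] at this; linarith
  set δ := sm - sp with hδdef
  -- sp ≥ -r
  have hsp_ge : -r ≤ sp := by
    have hex : ∃ β ∈ Ioc α 1, Sfun u t r e β ≠ ⊥ := by
      by_contra hne
      push_neg at hne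
      apply hSp_ne_bot
      rw [hSp]
      exact le_bot_iff.1 (iSup₂_le fun β hβ => (hne β hβ).le)
    obtain ⟨β, hβ, hne⟩ := hex
    obtain ⟨x, hx⟩ := Sfun_ne_bot_iff.1 hne
    have h3 : ((inner ℝ e (x - t) : ℝ) : EReal) ≤ Sfun u t r e β := le_sSup ⟨x, hx, rfl⟩
    have h4 : Sfun u t r e β ≤ Sp := le_iSup₂ (f := fun β _ => Sfun u t r e β) β hβ
    have h5 : (-r : ℝ) ≤ (inner ℝ e (x - t) : ℝ) := by
      have habs := abs_real_inner_le_norm e (x - t)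
      have h2' : ‖x - t‖ ≤ r := by
        have := hx.2; rwa [mem_closedBall, dist_eq_norm] at this
      simp only [he, one_mul] at habs
      have := abs_le.1 habs
      linarith [this.1]
    have := le_trans h3 h4
    rw [hSpc, EReal.coe_le_coe_iff] at this
    linarith
  -- choose k
  obtain ⟨k, hk⟩ := hdense (δ/(8*r)) (by positivity)
  rw [dist_eq_norm] at hk
  -- inner product perturbation bound
  have hpert : ∀ x ∈ closedBall t r,
      |(inner ℝ (E k) (x - t) : ℝ) - (inner ℝ e (x - t) : ℝ)| ≤ δ/8 := by
    intro x hx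
    have : (inner ℝ (E k) (x - t) : ℝ) - (inner ℝ e (x - t) : ℝ)
        = (inner ℝ (E k - e) (x - t) : ℝ) := by rw [inner_sub_left]
    rw [this]
    have h1' := abs_real_inner_le_norm (E k - e) (x - t)
    have h2' : ‖x - t‖ ≤ r := by
      rw [mem_closedBall, dist_eq_norm] at hx; exact hx
    have : ‖E k - e‖ * ‖x - t‖ ≤ (δ/(8*r)) * r := by
      apply mul_le_mul hk.le h2' (norm_nonneg _) (by positivity)
    have hr' : (δ/(8*r)) * r = δ/8 := by field_simp
    linarith
  -- Claim 1
  have hclaim1 : ∀ β ∈ Ico (0:ℝ) α, sm - δ/4 ≤ Sr u t r (E k) β := by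
    intro β hβ
    have hge : ((sm - δ/8 : ℝ) : EReal) < Sfun u t r e β := by
      calc ((sm - δ/8 : ℝ) : EReal) < (sm : EReal) := by
            rw [EReal.coe_lt_coe_iff]; linarith
        _ = Sm := hSmc.symm
        _ ≤ Sfun u t r e β := iInf₂_le β hβ
    rw [Sfun, lt_sSup_iff] at hge
    obtain ⟨b, ⟨x, hx, rfl⟩, hb⟩ := hge
    rw [EReal.coe_lt_coe_iff] at hb
    have hp := hpert x hx.2
    have hik : sm - δ/4 ≤ (inner ℝ (E k) (x - t) : ℝ) := by
      have := abs_le.1 hp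
      linarith [this.1]
    calc sm - δ/4 ≤ (inner ℝ (E k) (x - t) : ℝ) := hik
      _ ≤ Sr u t r (E k) β :=
          le_csSup (Sr_bddAbove hr (hE k) β) (mem_insert_of_mem _ ⟨x, hx, rfl⟩)
  -- Claim 2
  have hclaim2 : ∀ β ∈ Ioc α 1, Sr u t r (E k) β ≤ sp + δ/8 := by
    intro β hβ
    apply csSup_le ⟨_, mem_insert _ _⟩
    rintro y (rfl | ⟨x, hx, rfl⟩)
    · linarith
    · have h3 : ((inner ℝ e (x - t) : ℝ) : EReal) ≤ Sfun u t r e β := le_sSup ⟨x, hx, rfl⟩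
      have h4 : Sfun u t r e β ≤ Sp := le_iSup₂ (f := fun β _ => Sfun u t r e β) β hβ
      have h5 : (inner ℝ e (x - t) : ℝ) ≤ sp := by
        have := le_trans h3 h4
        rw [hSpc, EReal.coe_le_coe_iff] at this; exact this
      have hp := hpert x hx.2
      have := abs_le.1 hp
      linarith [this.2]
  -- gap
  have hgap : ∀ β ∈ Ico (0:ℝ) α, ∀ β' ∈ Ioc α 1,
      Sr u t r (E k) β' + δ/2 ≤ Sr u t r (E k) β := by
    intro β hβ β' hβ'
    have := hclaim1 β hβ
    have := hclaim2 β' hβ'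
    linarith
  refine ⟨k, ?_⟩
  intro hc
  set F := Sr u t r (E k) with hF
  by_cases hcase : ∃ β' ∈ Ioc α 1, F α - δ/4 ≤ F β'
  · -- left discontinuity
    obtain ⟨β', hβ', hβ'le⟩ := hcase
    have hev : ∀ᶠ β in nhdsWithin α (Iio α), F α + δ/4 ≤ F β := by
      filter_upwards [Ioo_mem_nhdsLT_of_mem (⟨hα.1, le_refl α⟩ : α ∈ Ioc (0:ℝ) α)]
        with β hβ
      have := hgap β ⟨hβ.1.le, hβ.2⟩ β' hβ'
      linarith
    have htend : Filter.Tendsto F (nhdsWithin α (Iio α)) (nhds (F α)) :=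
      (hc.continuousWithinAt (s := Iio α)).tendsto
    have := ge_of_tendsto htend hev
    linarith
  · push_neg at hcase
    have hev : ∀ᶠ β in nhdsWithin α (Ioi α), F β ≤ F α - δ/4 := by
      filter_upwards [Ioo_mem_nhdsGT_of_mem (⟨le_refl α, hα.2⟩ : α ∈ Ico α 1)]
        with β hβ
      exact (hcase β ⟨hβ.1, hβ.2.le⟩).le
    have htend : Filter.Tendsto F (nhdsWithin α (Ioi α)) (nhds (F α)) :=
      (hc.continuousWithinAt (s := Ioi α)).tendsto
    have := le_of_tendsto htend hev
    linarith


noncomputable def Dset {m : ℕ} (u : EuclideanSpace ℝ (Fin m) → ℝ)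
    (t : EuclideanSpace ℝ (Fin m)) (r : ℝ)
    (e : EuclideanSpace ℝ (Fin m)) : Set ℝ :=
  {α | α ∈ Ioo (0:ℝ) 1 ∧ Sfun u t r e α ≠ ⊥ ∧ Sfun u t r e α ≠ ⊤ ∧
    ((∀ β ∈ Ioc α 1, Sfun u t r e β = ⊥) ∨
      ((⊥ < ⨆ β ∈ Ioc α 1, Sfun u t r e β) ∧
        ((⨆ β ∈ Ioc α 1, Sfun u t r e β) < ⨅ β ∈ Ico (0:ℝ) α, Sfun u t r e β)))}

theorem countable_Dutr {m : ℕ} (u : EuclideanSpace ℝ (Fin m) → ℝ)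
    (hu : ∀ x, u x ∈ Icc (0:ℝ) 1)
    (t : EuclideanSpace ℝ (Fin m)) (r : ℝ) (hr : 0 < r) :
    Set.Countable (⋃ e ∈ sphere (0 : EuclideanSpace ℝ (Fin m)) 1, Dset u t r e) := by
  rcases eq_empty_or_nonempty (sphere (0 : EuclideanSpace ℝ (Fin m)) 1) with hS | hS
  · simp [hS]
  · have : Nonempty ↥(sphere (0 : EuclideanSpace ℝ (Fin m)) 1) := hS.to_subtype
    obtain ⟨seq, hseq⟩ :=
      TopologicalSpace.exists_dense_seq ↥(sphere (0 : EuclideanSpace ℝ (Fin m)) 1)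
    set E : ℕ → EuclideanSpace ℝ (Fin m) := fun k => (seq k : EuclideanSpace ℝ (Fin m))
      with hEdef
    have hE : ∀ k, ‖E k‖ = 1 := fun k => mem_sphere_zero_iff_norm.1 (seq k).2
    have hdense : ∀ e ∈ sphere (0 : EuclideanSpace ℝ (Fin m)) 1,
        ∀ ε > 0, ∃ k, dist (E k) e < ε := by
      intro e he ε hε
      obtain ⟨k, hk⟩ := (Metric.denseRange_iff.1 hseq) ⟨e, he⟩ ε hε
      exact ⟨k, by rw [Subtype.dist_eq] at hk; rw [dist_comm]; exact hk⟩
    set G : Set ℝ := {α | α ∈ Ioo (0:ℝ) 1 ∧ ({x | α ≤ u x} ∩ closedBall t r).Nonempty ∧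
      ∀ β ∈ Ioc α 1, ¬({x | β ≤ u x} ∩ closedBall t r).Nonempty} with hGdef
    have hGsub : G.Subsingleton := by
      intro a ha b hb
      by_contra hne
      rcases lt_or_gt_of_ne hne with h | h
      · exact ha.2.2 b ⟨h, hb.1.2.le⟩ hb.2.1
      · exact hb.2.2 a ⟨h, ha.1.2.le⟩ ha.2.1
    have hDisc : ∀ k : ℕ, Set.Countable {α : ℝ | ¬ContinuousAt (Sr u t r (E k)) α} :=
      fun k => (Sr_antitone hr (hE k)).countable_not_continuousAt
    refine Set.Countable.mono ?_ (hGsub.countable.union (Set.countable_iUnion hDisc))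
    rintro α hα
    simp only [mem_iUnion] at hα
    obtain ⟨e, he, hD⟩ := hα
    obtain ⟨hmem, hbot, htop, hdisj⟩ := hD
    rcases hdisj with hleft | ⟨hP1, hP2⟩
    · left
      refine ⟨hmem, Sfun_ne_bot_iff.1 hbot, fun β hβ hne => ?_⟩
      exact (Sfun_ne_bot_iff (e := e)).2 hne (hleft β hβ)
    · right
      obtain ⟨k, hk⟩ := key hr (mem_sphere_zero_iff_norm.1 he) hmem hbot hP1 hP2 E hE
        (hdense e he)
      exact mem_iUnion.2 ⟨k, hk⟩
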